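/- Let B be a unital C*-algebra, let A be a C*-subalgebra of B containing the unit 1 of B, and let T : A → B be a bounded linear map which is a derivation at zero. Then T is a generalized derivation, that is, T(xy) = T(x)y + xT(y) − xT(1)y for all x, y ∈ A. -/

import Mathlib

/-! Auxiliary: a piecewise-linear partition of unity on ℝ ("bump" functions), used to
implement the partition-of-unity argument via the continuous functional calculus. -/


noncomputable def bump (δ : ℝ) (i : ℤ) (t : ℝ) : ℝ := max 0 (1 - |t - i * δ| / δ)

@[fun_prop]
lemma bump_continuous (δ : ℝ) (i : ℤ) : Continuous (bump δ i) := by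
  unfold bump; fun_prop

lemma bump_nonneg (δ : ℝ) (i : ℤ) (t : ℝ) : 0 ≤ bump δ i t := le_max_left _ _

lemma bump_le_one {δ : ℝ} (hδ : 0 < δ) (i : ℤ) (t : ℝ) : bump δ i t ≤ 1 := by
  unfold bump
  have : 0 ≤ |t - i * δ| / δ := div_nonneg (abs_nonneg _) hδ.le
  simp only [max_le_iff]
  constructor <;> linarith

lemma bump_eq_zero {δ : ℝ} (hδ : 0 < δ) {i : ℤ} {t : ℝ} (h : δ ≤ |t - i * δ|) :
    bump δ i t = 0 := by
  unfold bump
  rw [max_eq_left]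
  have : 1 ≤ |t - i * δ| / δ := (one_le_div hδ).mpr h
  linarith

lemma bump_ne_zero {δ : ℝ} (hδ : 0 < δ) {i : ℤ} {t : ℝ} (h : bump δ i t ≠ 0) :
    |t - i * δ| < δ := by
  by_contra hc
  push_neg at hc
  exact h (bump_eq_zero hδ hc)

lemma bump_mul_eq_zero {δ : ℝ} (hδ : 0 < δ) {i j : ℤ} (hij : 2 ≤ |i - j|) (t : ℝ) :
    bump δ i t * bump δ j t = 0 := by
  by_contra hc
  have hi : |t - i * δ| < δ := bump_ne_zero hδ (left_ne_zero_of_mul hc)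
  have hj : |t - j * δ| < δ := bump_ne_zero hδ (right_ne_zero_of_mul hc)
  have h2 : (2 : ℝ) ≤ |(i : ℝ) - (j : ℝ)| := by exact_mod_cast hij
  have h3 : |(i:ℝ) - j| * δ = |(i:ℝ) * δ - j * δ| := by
    have e : ((i:ℝ) - j) * δ = (i:ℝ) * δ - j * δ := by ring
    rw [← e, abs_mul, abs_of_pos hδ]
  have h4 : |(i:ℝ) * δ - j * δ| ≤ |t - i * δ| + |t - j * δ| := by
    calc |(i:ℝ)*δ - j*δ| ≤ |(i:ℝ)*δ - t| + |t - j*δ| := abs_sub_le _ _ _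
      _ = |t - i*δ| + |t - j*δ| := by rw [abs_sub_comm ((i:ℝ)*δ) t]
  nlinarith

lemma bump_sum_eq_one {δ : ℝ} (hδ : 0 < δ) {N : ℤ} {t : ℝ} (ht : |t| ≤ (N - 1) * δ) :
    ∑ i ∈ Finset.Icc (-N) N, bump δ i t = 1 := by
  rw [abs_le] at ht
  set k : ℤ := ⌊t / δ⌋ with hk
  have h1 : (k : ℝ) ≤ t / δ := Int.floor_le _
  have h2 : t / δ < k + 1 := Int.lt_floor_add_one _
  have hdiv : t / δ * δ = t := div_mul_cancel₀ t hδ.ne'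
  have hk1 : (k : ℝ) * δ ≤ t := by
    calc (k:ℝ) * δ ≤ t / δ * δ := mul_le_mul_of_nonneg_right h1 hδ.le
      _ = t := hdiv
  have hk2 : t < ((k : ℝ) + 1) * δ := by
    calc t = t / δ * δ := hdiv.symm
      _ < ((k:ℝ) + 1) * δ := by
          apply mul_lt_mul_of_pos_right _ hδ
          exact_mod_cast h2
  have hkl : -N + 1 ≤ k := by
    rw [hk]
    rw [Int.le_floor]
    push_cast
    rw [le_div_iff₀ hδ]
    nlinarith [ht.1]
  have hku : k ≤ N - 1 := by
    rw [hk]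
    have : t / δ ≤ ((N - 1 : ℤ) : ℝ) := by
      rw [div_le_iff₀ hδ]
      push_cast
      nlinarith [ht.2]
    calc ⌊t / δ⌋ ≤ ⌊((N - 1 : ℤ) : ℝ)⌋ := Int.floor_le_floor this
      _ = N - 1 := Int.floor_intCast _
  have hsub : ({k, k + 1} : Finset ℤ) ⊆ Finset.Icc (-N) N := by
    intro i hi
    simp only [Finset.mem_insert, Finset.mem_singleton] at hi
    rw [Finset.mem_Icc]
    omega
  have hzero : ∀ i ∈ Finset.Icc (-N) N, i ∉ ({k, k + 1} : Finset ℤ) → bump δ i t = 0 := by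
    intro i _ hi
    simp only [Finset.mem_insert, Finset.mem_singleton, not_or] at hi
    apply bump_eq_zero hδ
    rcases lt_or_ge i k with hik | hik
    · have hi' : (i : ℝ) ≤ (k : ℝ) - 1 := by exact_mod_cast (by omega : i ≤ k - 1)
      have : δ ≤ t - i * δ := by nlinarith
      calc δ ≤ t - i * δ := this
        _ ≤ |t - i * δ| := le_abs_self _
    · have : k + 2 ≤ i := by omega
      have hi' : (k : ℝ) + 2 ≤ (i : ℝ) := by exact_mod_cast this
      have : δ ≤ i * δ - t := by nlinarith
      calc δ ≤ (i : ℝ) * δ - t := this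
        _ ≤ |(i : ℝ) * δ - t| := le_abs_self _
        _ = |t - i * δ| := abs_sub_comm _ _
  rw [← Finset.sum_subset hsub hzero]
  rw [Finset.sum_insert (by simp), Finset.sum_singleton]
  have e1 : bump δ k t = 1 - (t - k * δ) / δ := by
    unfold bump
    rw [abs_of_nonneg (by linarith), max_eq_right]
    have : (t - k * δ) / δ < 1 := (div_lt_one hδ).mpr (by nlinarith)
    linarith
  have e2 : bump δ (k + 1) t = (t - k * δ) / δ := by
    unfold bump
    push_cast
    rw [abs_of_nonpos (by nlinarith), max_eq_right]
    · field_simp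
      ring
    · have h3 : 0 ≤ t - k * δ := by linarith
      have : -(t - ((k:ℝ) + 1) * δ) / δ ≤ 1 := by
        rw [div_le_one hδ]
        nlinarith
      linarith
  rw [e1, e2]
  ring

-- separated-support sum bound
lemma sep_sum_bound {δ t c : ℝ} (hδ : 0 < δ) (hc : 0 ≤ c) (S : Finset ℤ)
    (hsep : ∀ i ∈ S, ∀ j ∈ S, i ≠ j → 2 ≤ |i - j|)
    (f : ℤ → ℝ) (hb : ∀ i ∈ S, |f i| ≤ c)
    (hsupp : ∀ i ∈ S, f i ≠ 0 → |t - i * δ| < δ) :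
    |∑ i ∈ S, f i| ≤ c := by
  by_cases hz : ∀ i ∈ S, f i = 0
  · rw [Finset.sum_eq_zero hz, abs_zero]; exact hc
  · push_neg at hz
    obtain ⟨i₀, hi₀S, hi₀⟩ := hz
    rw [Finset.sum_eq_single_of_mem i₀ hi₀S ?_]
    · exact hb i₀ hi₀S
    · intro j hj hne
      by_contra hfj
      have h1 := hsupp i₀ hi₀S hi₀
      have h2 := hsupp j hj hfj
      have hsep' := hsep j hj i₀ hi₀S hne
      have h2' : (2 : ℝ) ≤ |(j : ℝ) - i₀| := by exact_mod_cast hsep'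
      have h3 : |(j:ℝ) - i₀| * δ = |(j:ℝ) * δ - i₀ * δ| := by
        have e : ((j:ℝ) - i₀) * δ = (j:ℝ) * δ - i₀ * δ := by ring
        rw [← e, abs_mul, abs_of_pos hδ]
      have h4 : |(j:ℝ) * δ - i₀ * δ| ≤ |t - j * δ| + |t - i₀ * δ| := by
        calc |(j:ℝ)*δ - i₀*δ| ≤ |(j:ℝ)*δ - t| + |t - i₀*δ| := abs_sub_le _ _ _
          _ = |t - j*δ| + |t - i₀*δ| := by rw [abs_sub_comm ((j:ℝ)*δ) t]
      nlinarith

section Key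

variable {𝓐 X : Type*} [CStarAlgebra 𝓐] [NormedAddCommGroup X] [NormedSpace ℂ X]

lemma cfc_mul_eq_zero (h : 𝓐) (f g : ℝ → ℝ) (hf : Continuous f) (hg : Continuous g)
    (hfg : ∀ t, f t * g t = 0) : cfc f h * cfc g h = 0 := by
  rw [← cfc_mul f g h hf.continuousOn hg.continuousOn]
  have : (fun t => f t * g t) = (0 : ℝ → ℝ) := funext hfg
  rw [this, cfc_zero]

set_option maxHeartbeats 1000000

/-- The key lemma: a continuous bilinear map on a unital C*-algebra which vanishes on
pairs with zero product takes the same value on `(h, 1)` and `(1, h)` for selfadjoint `h`. -/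
lemma keyLemma (Φ : 𝓐 →ₗ[ℂ] 𝓐 →ₗ[ℂ] X) (C : ℝ) (hC0 : 0 ≤ C)
    (hC : ∀ a b, ‖Φ a b‖ ≤ C * ‖a‖ * ‖b‖)
    (hΦ : ∀ a b : 𝓐, a * b = 0 → Φ a b = 0)
    (h : 𝓐) (hh : IsSelfAdjoint h) : Φ h 1 = Φ 1 h := by
  rcases subsingleton_or_nontrivial 𝓐 with hs | hs
  · rw [Subsingleton.elim h (1 : 𝓐)]
  have main : ∀ δ : ℝ, 0 < δ → ‖Φ h 1 - Φ 1 h‖ ≤ 27 * (C + 1) * δ := by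
    intro δ hδ
    -- setup
    set N : ℤ := ⌈‖h‖ / δ⌉ + 1 with hN
    have hNb : ‖h‖ ≤ ((N : ℝ) - 1) * δ := by
      have h1 : ‖h‖ / δ ≤ (⌈‖h‖ / δ⌉ : ℝ) := Int.le_ceil _
      have h2 : ((N : ℝ) - 1) = (⌈‖h‖ / δ⌉ : ℝ) := by rw [hN]; push_cast; ring
      rw [h2]
      calc ‖h‖ = ‖h‖ / δ * δ := (div_mul_cancel₀ _ hδ.ne').symm
        _ ≤ (⌈‖h‖ / δ⌉ : ℝ) * δ := mul_le_mul_of_nonneg_right h1 hδ.le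
    have hspec : ∀ t ∈ spectrum ℝ h, |t| ≤ ((N : ℝ) - 1) * δ := by
      intro t ht
      exact (Real.norm_eq_abs t ▸ spectrum.norm_le_norm_of_mem ht).trans hNb
    set I : Finset ℤ := Finset.Icc (-N) N with hI
    set av : ℤ → 𝓐 := fun i => cfc (bump δ i) h with hav
    set mv : ℤ → 𝓐 := fun i => cfc (fun t => t * bump δ i t) h with hmv
    set xv : ℤ → 𝓐 := fun i => cfc (fun t => (t - i * δ) * bump δ i t) h with hxv
    -- partition of unity identities
    have hone : (1 : 𝓐) = ∑ i ∈ I, av i := by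
      rw [hav, ← cfc_sum (fun i => bump δ i) h I (fun i _ => (bump_continuous δ i).continuousOn)]
      symm
      calc cfc (∑ i ∈ I, bump δ i) h = cfc (1 : ℝ → ℝ) h := by
            apply cfc_congr
            intro t ht
            simp only [Finset.sum_apply, Pi.one_apply]
            exact bump_sum_eq_one hδ (hspec t ht)
        _ = 1 := cfc_one ℝ h
    have hsh : h = ∑ i ∈ I, mv i := by
      rw [hmv, ← cfc_sum (fun i => fun t => t * bump δ i t) h I
        (fun i _ => (by fun_prop : Continuous fun t => t * bump δ i t).continuousOn)]
      symm
      calc cfc (∑ i ∈ I, fun t => t * bump δ i t) h = cfc (id : ℝ → ℝ) h := by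
            apply cfc_congr
            intro t ht
            simp only [Finset.sum_apply, id_eq]
            rw [← Finset.mul_sum, bump_sum_eq_one hδ (hspec t ht), mul_one]
        _ = h := cfc_id ℝ h hh
    have hmx : ∀ i : ℤ, mv i = xv i + ((i : ℝ) * δ) • av i := by
      intro i
      have h1 : ((i : ℝ) * δ) • av i = cfc (fun t => ((i:ℝ)*δ) * bump δ i t) h := by
        rw [hav]
        rw [← cfc_smul ((i:ℝ)*δ) (bump δ i) h (bump_continuous δ i).continuousOn]
        simp only [smul_eq_mul]
      rw [hmv, hxv, h1]
      dsimp only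
      rw [← cfc_add h (fun t => (t - i*δ) * bump δ i t) (fun t => ((i:ℝ)*δ) * bump δ i t)
        (by fun_prop) (by fun_prop)]
      apply cfc_congr
      intro t _
      ring
    -- zero products
    have hza : ∀ i j : ℤ, 2 ≤ |i - j| → av i * av j = 0 := by
      intro i j hij
      exact cfc_mul_eq_zero h _ _ (by fun_prop) (by fun_prop) (fun t => bump_mul_eq_zero hδ hij t)
    have hzxa : ∀ i j : ℤ, 2 ≤ |i - j| → xv i * av j = 0 := by
      intro i j hij
      refine cfc_mul_eq_zero h _ _ (by fun_prop) (by fun_prop) (fun t => ?_)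
      have := bump_mul_eq_zero hδ hij t
      calc (t - i*δ) * bump δ i t * bump δ j t = (t - i*δ) * (bump δ i t * bump δ j t) := by ring
        _ = 0 := by rw [this, mul_zero]
    have hzax : ∀ i j : ℤ, 2 ≤ |i - j| → av i * xv j = 0 := by
      intro i j hij
      refine cfc_mul_eq_zero h _ _ (by fun_prop) (by fun_prop) (fun t => ?_)
      have := bump_mul_eq_zero hδ hij t
      calc bump δ i t * ((t - j*δ) * bump δ j t) = (t - j*δ) * (bump δ i t * bump δ j t) := by ring
        _ = 0 := by rw [this, mul_zero]
    have hzma : ∀ i j : ℤ, 2 ≤ |i - j| → mv i * av j = 0 := by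
      intro i j hij
      refine cfc_mul_eq_zero h _ _ (by fun_prop) (by fun_prop) (fun t => ?_)
      have := bump_mul_eq_zero hδ hij t
      calc t * bump δ i t * bump δ j t = t * (bump δ i t * bump δ j t) := by ring
        _ = 0 := by rw [this, mul_zero]
    have hzam : ∀ i j : ℤ, 2 ≤ |i - j| → av i * mv j = 0 := by
      intro i j hij
      refine cfc_mul_eq_zero h _ _ (by fun_prop) (by fun_prop) (fun t => ?_)
      have := bump_mul_eq_zero hδ hij t
      calc bump δ i t * (t * bump δ j t) = t * (bump δ i t * bump δ j t) := by ring
        _ = 0 := by rw [this, mul_zero]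
    -- norm bounds for separated families
    have hav_le : ∀ S : Finset ℤ, (∀ i ∈ S, ∀ j ∈ S, i ≠ j → 2 ≤ |i - j|) →
        ‖∑ i ∈ S, av i‖ ≤ 1 := by
      intro S hsep
      rw [hav, ← cfc_sum (fun i => bump δ i) h S (fun i _ => (bump_continuous δ i).continuousOn)]
      refine norm_cfc_le zero_le_one fun t _ => ?_
      simp only [Finset.sum_apply, Real.norm_eq_abs]
      refine sep_sum_bound (t := t) hδ zero_le_one S hsep _ (fun i _ => ?_) (fun i _ hne => bump_ne_zero hδ hne)
      rw [abs_of_nonneg (bump_nonneg δ i t)]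
      exact bump_le_one hδ i t
    have hxv_le : ∀ S : Finset ℤ, (∀ i ∈ S, ∀ j ∈ S, i ≠ j → 2 ≤ |i - j|) →
        ‖∑ i ∈ S, xv i‖ ≤ δ := by
      intro S hsep
      rw [hxv, ← cfc_sum (fun i => fun t => (t - i*δ) * bump δ i t) h S
        (fun i _ => (by fun_prop : Continuous fun t => (t - i*δ) * bump δ i t).continuousOn)]
      refine norm_cfc_le hδ.le fun t _ => ?_
      simp only [Finset.sum_apply, Real.norm_eq_abs]
      refine sep_sum_bound (t := t) hδ hδ.le S hsep _ (fun i _ => ?_) (fun i _ hne => ?_)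
      · by_cases hb0 : bump δ i t = 0
        · rw [hb0, mul_zero, abs_zero]; exact hδ.le
        · have h1 := bump_ne_zero hδ hb0
          rw [abs_mul, abs_of_nonneg (bump_nonneg δ i t)]
          nlinarith [bump_le_one hδ i t, bump_nonneg δ i t, abs_nonneg (t - (i:ℝ)*δ)]
      · exact bump_ne_zero hδ fun hb => hne (by rw [hb, mul_zero])
    -- smul helpers
    have Φsm₁ : ∀ (r : ℝ) (a b : 𝓐), Φ (r • a) b = r • Φ a b := by
      intro r a b
      rw [← algebraMap_smul ℂ r a, map_smul, LinearMap.smul_apply, algebraMap_smul]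
    have Φsm₂ : ∀ (r : ℝ) (a b : 𝓐), Φ a (r • b) = r • Φ a b := by
      intro r a b
      rw [← algebraMap_smul ℂ r b, map_smul, algebraMap_smul]
    -- the double sum decomposition
    set F : ℤ × ℤ → X := fun p => Φ (mv p.1) (av p.2) - Φ (av p.1) (mv p.2) with hFdef
    have hF : Φ h 1 - Φ 1 h = ∑ p ∈ I ×ˢ I, F p := by
      have e1 : Φ h 1 = ∑ p ∈ I ×ˢ I, Φ (mv p.1) (av p.2) := by
        calc Φ h 1 = Φ (∑ i ∈ I, mv i) (∑ j ∈ I, av j) := by rw [← hsh, ← hone]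
          _ = ∑ i ∈ I, Φ (mv i) (∑ j ∈ I, av j) := by
              rw [map_sum Φ mv I, LinearMap.sum_apply]
          _ = ∑ i ∈ I, ∑ j ∈ I, Φ (mv i) (av j) :=
              Finset.sum_congr rfl fun i _ => map_sum _ _ _
          _ = ∑ p ∈ I ×ˢ I, Φ (mv p.1) (av p.2) :=
              (Finset.sum_product I I (fun p => Φ (mv p.1) (av p.2))).symm
      have e2 : Φ 1 h = ∑ p ∈ I ×ˢ I, Φ (av p.1) (mv p.2) := by
        calc Φ 1 h = Φ (∑ i ∈ I, av i) (∑ j ∈ I, mv j) := by rw [← hsh, ← hone]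
          _ = ∑ i ∈ I, Φ (av i) (∑ j ∈ I, mv j) := by
              rw [map_sum Φ av I, LinearMap.sum_apply]
          _ = ∑ i ∈ I, ∑ j ∈ I, Φ (av i) (mv j) :=
              Finset.sum_congr rfl fun i _ => map_sum _ _ _
          _ = ∑ p ∈ I ×ˢ I, Φ (av p.1) (mv p.2) :=
              (Finset.sum_product I I (fun p => Φ (av p.1) (mv p.2))).symm
      rw [e1, e2, ← Finset.sum_sub_distrib]
    set P : Finset (ℤ × ℤ) := (I ×ˢ I).filter (fun p => -1 ≤ p.2 - p.1 ∧ p.2 - p.1 ≤ 1) with hP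
    have hF2 : ∑ p ∈ I ×ˢ I, F p = ∑ p ∈ P, F p := by
      rw [hP]
      symm
      apply Finset.sum_filter_of_ne
      intro p _ hne
      by_contra hcon
      apply hne
      have habs : 2 ≤ |p.1 - p.2| := le_abs.mpr (by omega)
      rw [hFdef]
      dsimp only
      rw [hΦ _ _ (hzma _ _ habs), hΦ _ _ (hzam _ _ habs), sub_zero]
    set g : ℤ × ℤ → ℤ × ℤ := fun p => (p.2 - p.1, p.1 % 3) with hg
    set Q : Finset (ℤ × ℤ) := ({-1, 0, 1} : Finset ℤ) ×ˢ ({0, 1, 2} : Finset ℤ) with hQ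
    have hmaps : ∀ p ∈ P, g p ∈ Q := by
      intro p hp
      rw [hP, Finset.mem_filter] at hp
      rw [hQ, hg]
      simp only [Finset.mem_product, Finset.mem_insert, Finset.mem_singleton]
      omega
    have hfib := Finset.sum_fiberwise_of_maps_to hmaps F
    have hfiber : ∀ q ∈ Q, ‖∑ p ∈ P.filter (fun p => g p = q), F p‖ ≤ 3 * C * δ := by
      rintro ⟨s, r⟩ hq
      have hsr : -1 ≤ s ∧ s ≤ 1 := by
        rw [hQ] at hq
        simp only [Finset.mem_product, Finset.mem_insert, Finset.mem_singleton] at hq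
        omega
      set S : Finset ℤ := I.filter (fun i => i % 3 = r ∧ i + s ∈ I) with hS
      have hfeq : P.filter (fun p => g p = (s, r)) = S.image (fun i => (i, i + s)) := by
        ext p
        rw [Finset.mem_filter, hP, Finset.mem_filter, Finset.mem_product, Finset.mem_image]
        constructor
        · rintro ⟨⟨⟨hp1, hp2⟩, _⟩, hgp⟩
          rw [hg] at hgp
          have h1 : p.2 - p.1 = s := congrArg Prod.fst hgp
          have h2 : p.1 % 3 = r := congrArg Prod.snd hgp
          refine ⟨p.1, ?_, ?_⟩
          · rw [hS, Finset.mem_filter]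
            have hps : p.1 + s = p.2 := by omega
            exact ⟨hp1, h2, by rw [hps]; exact hp2⟩
          · have hps : p.1 + s = p.2 := by omega
            rw [hps]
        · rintro ⟨i, hiS, rfl⟩
          rw [hS, Finset.mem_filter] at hiS
          obtain ⟨hiI, hir, his⟩ := hiS
          refine ⟨⟨⟨hiI, his⟩, by omega⟩, ?_⟩
          rw [hg]
          simp only [Prod.mk.injEq]
          exact ⟨by omega, hir⟩
      have hsepS : ∀ i ∈ S, ∀ j ∈ S, i ≠ j → 2 ≤ |i - j| := by
        intro i hi j hj hne
        rw [hS, Finset.mem_filter] at hi hj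
        exact le_abs.mpr (by omega)
      have hsepS' : ∀ i ∈ S.image (· + s), ∀ j ∈ S.image (· + s), i ≠ j → 2 ≤ |i - j| := by
        intro i hi j hj hne
        simp only [Finset.mem_image] at hi hj
        obtain ⟨i', hi', rfl⟩ := hi
        obtain ⟨j', hj', rfl⟩ := hj
        rw [hS, Finset.mem_filter] at hi' hj'
        refine le_abs.mpr (by omega)
      have him : ∀ (w : ℤ → 𝓐), ∑ i ∈ S, w (i + s) = ∑ j ∈ S.image (· + s), w j := by
        intro w
        rw [Finset.sum_image (fun i _ j _ hij => by omega)]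
      have diag : ∀ (u v : ℤ → 𝓐), (∀ i ∈ S, ∀ j ∈ S, i ≠ j → u i * v j = 0) →
          ∑ i ∈ S, Φ (u i) (v i) = Φ (∑ i ∈ S, u i) (∑ j ∈ S, v j) := by
        intro u v hcross
        symm
        calc Φ (∑ i ∈ S, u i) (∑ j ∈ S, v j)
            = ∑ i ∈ S, Φ (u i) (∑ j ∈ S, v j) := by
              rw [map_sum Φ u S, LinearMap.sum_apply]
          _ = ∑ i ∈ S, ∑ j ∈ S, Φ (u i) (v j) :=
              Finset.sum_congr rfl fun i _ => map_sum _ _ _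
          _ = ∑ i ∈ S, Φ (u i) (v i) := by
              refine Finset.sum_congr rfl fun i hi => ?_
              exact Finset.sum_eq_single_of_mem i hi fun j hj hne =>
                hΦ _ _ (hcross i hi j hj fun e => hne e.symm)
      have hterm : ∀ i : ℤ, F (i, i + s) =
          Φ (xv i) (av (i + s)) - Φ (av i) (xv (i + s))
            + (-(s:ℝ) * δ) • Φ (av i) (av (i + s)) := by
        intro i
        rw [hFdef]
        dsimp only
        rw [hmx i, hmx (i + s)]
        simp only [map_add, LinearMap.add_apply, Φsm₁, Φsm₂]
        push_cast
        module
      rw [hfeq, Finset.sum_image (fun i _ j _ hij => by simpa using congrArg Prod.fst hij)]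
      have hsplit : ∑ i ∈ S, F (i, i + s) =
          Φ (∑ i ∈ S, xv i) (∑ j ∈ S.image (· + s), av j)
          - Φ (∑ i ∈ S, av i) (∑ j ∈ S.image (· + s), xv j)
          + (-(s:ℝ) * δ) • Φ (∑ i ∈ S, av i) (∑ j ∈ S.image (· + s), av j) := by
        rw [Finset.sum_congr rfl (fun i _ => hterm i), Finset.sum_add_distrib,
          Finset.sum_sub_distrib, ← Finset.smul_sum]
        congr 1
        · congr 1
          · rw [diag xv (fun i => av (i + s)) (fun i hi j hj hne => by
              apply hzxa
              rw [hS, Finset.mem_filter] at hi hj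
              exact le_abs.mpr (by omega)), him av]
          · rw [diag av (fun i => xv (i + s)) (fun i hi j hj hne => by
              apply hzax
              rw [hS, Finset.mem_filter] at hi hj
              exact le_abs.mpr (by omega)), him xv]
        · rw [diag av (fun i => av (i + s)) (fun i hi j hj hne => by
            apply hza
            rw [hS, Finset.mem_filter] at hi hj
            exact le_abs.mpr (by omega)), him av]
      rw [hsplit]
      have b1 : ‖Φ (∑ i ∈ S, xv i) (∑ j ∈ S.image (· + s), av j)‖ ≤ C * δ := by
        calc ‖Φ (∑ i ∈ S, xv i) (∑ j ∈ S.image (· + s), av j)‖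
            ≤ C * ‖∑ i ∈ S, xv i‖ * ‖∑ j ∈ S.image (· + s), av j‖ := hC _ _
          _ ≤ C * δ * 1 := by
              gcongr
              · exact hxv_le S hsepS
              · exact hav_le _ hsepS'
          _ = C * δ := mul_one _
      have b2 : ‖Φ (∑ i ∈ S, av i) (∑ j ∈ S.image (· + s), xv j)‖ ≤ C * δ := by
        calc ‖Φ (∑ i ∈ S, av i) (∑ j ∈ S.image (· + s), xv j)‖
            ≤ C * ‖∑ i ∈ S, av i‖ * ‖∑ j ∈ S.image (· + s), xv j‖ := hC _ _
          _ ≤ C * 1 * δ := by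
              gcongr
              · exact hav_le S hsepS
              · exact hxv_le _ hsepS'
          _ = C * δ := by ring
      have b3 : ‖(-(s:ℝ) * δ) • Φ (∑ i ∈ S, av i) (∑ j ∈ S.image (· + s), av j)‖ ≤ C * δ := by
        rw [norm_smul, Real.norm_eq_abs]
        have habs : |(-(s:ℝ)) * δ| ≤ δ := by
          rw [abs_mul, abs_neg, abs_of_pos hδ]
          have : |(s:ℝ)| ≤ 1 := by
            rw [abs_le]
            constructor
            · exact_mod_cast hsr.1
            · exact_mod_cast hsr.2
          nlinarith [abs_nonneg (s:ℝ)]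
        have hn : ‖Φ (∑ i ∈ S, av i) (∑ j ∈ S.image (· + s), av j)‖ ≤ C := by
          calc ‖Φ (∑ i ∈ S, av i) (∑ j ∈ S.image (· + s), av j)‖
              ≤ C * ‖∑ i ∈ S, av i‖ * ‖∑ j ∈ S.image (· + s), av j‖ := hC _ _
            _ ≤ C * 1 * 1 := by
                gcongr
                · exact hav_le S hsepS
                · exact hav_le _ hsepS'
            _ = C := by ring
        calc |(-(s:ℝ)) * δ| * ‖Φ (∑ i ∈ S, av i) (∑ j ∈ S.image (· + s), av j)‖
            ≤ δ * C := by
              apply mul_le_mul habs hn (norm_nonneg _) hδ.le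
          _ = C * δ := by ring
      calc ‖Φ (∑ i ∈ S, xv i) (∑ j ∈ S.image (· + s), av j)
          - Φ (∑ i ∈ S, av i) (∑ j ∈ S.image (· + s), xv j)
          + (-(s:ℝ) * δ) • Φ (∑ i ∈ S, av i) (∑ j ∈ S.image (· + s), av j)‖
          ≤ ‖Φ (∑ i ∈ S, xv i) (∑ j ∈ S.image (· + s), av j)
              - Φ (∑ i ∈ S, av i) (∑ j ∈ S.image (· + s), xv j)‖
            + ‖(-(s:ℝ) * δ) • Φ (∑ i ∈ S, av i) (∑ j ∈ S.image (· + s), av j)‖ :=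
            norm_add_le _ _
        _ ≤ (‖Φ (∑ i ∈ S, xv i) (∑ j ∈ S.image (· + s), av j)‖
              + ‖Φ (∑ i ∈ S, av i) (∑ j ∈ S.image (· + s), xv j)‖)
            + ‖(-(s:ℝ) * δ) • Φ (∑ i ∈ S, av i) (∑ j ∈ S.image (· + s), av j)‖ := by
            gcongr
            exact norm_sub_le _ _
        _ ≤ (C * δ + C * δ) + C * δ := by gcongr
        _ = 3 * C * δ := by ring
    rw [hF, hF2, ← hfib]
    calc ‖∑ q ∈ Q, ∑ p ∈ P.filter (fun p => g p = q), F p‖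
        ≤ ∑ q ∈ Q, ‖∑ p ∈ P.filter (fun p => g p = q), F p‖ := norm_sum_le _ _
      _ ≤ ∑ _q ∈ Q, 3 * C * δ := Finset.sum_le_sum hfiber
      _ = (Q.card : ℝ) * (3 * C * δ) := by rw [Finset.sum_const, nsmul_eq_mul]
      _ ≤ 27 * (C + 1) * δ := by
          have hcard : (Q.card : ℝ) ≤ 9 := by
            rw [hQ, Finset.card_product]
            norm_num
          nlinarith [mul_nonneg (mul_nonneg hC0 hδ.le) (by norm_num : (0:ℝ) ≤ 3)]

  -- conclude
  rw [← sub_eq_zero]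
  by_contra hne
  have hpos : 0 < ‖Φ h 1 - Φ 1 h‖ := norm_pos_iff.mpr hne
  set c := ‖Φ h 1 - Φ 1 h‖
  have h28 : (0:ℝ) < 28 * (C + 1) := by positivity
  have hm := main (c / (28 * (C + 1))) (by positivity)
  have hne1 : C + 1 ≠ 0 := by positivity
  have heq : 27 * (C + 1) * (c / (28 * (C + 1))) = (27 / 28) * c := by
    field_simp
  rw [heq] at hm
  linarith

end Key


set_option maxHeartbeats 1000000

/-- A bounded linear map `T : A → B` on a C*-subalgebra `A` (containing the unit) of a unital
C*-algebra `B` which is a derivation at zero is a generalized derivation. -/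
theorem stmt7 {B : Type*} [CStarAlgebra B] (A : StarSubalgebra ℂ B)
    (hA : IsClosed (A : Set B)) (T : A →ₗ[ℂ] B) (hcont : Continuous T)
    (hT : ∀ a b : A, (a : B) * (b : B) = 0 → T a * (b : B) + (a : B) * T b = 0) :
    ∀ x y : A, T (x * y) = T x * (y : B) + (x : B) * T y - (x : B) * T 1 * (y : B) := by
  haveI : IsClosed (A : Set B) := hA
  -- operator norm bound
  obtain ⟨C, hC0, hCb⟩ : ∃ C : ℝ, 0 ≤ C ∧ ∀ a : ↥A, ‖T a‖ ≤ C * ‖a‖ := by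
    let Tc : ↥A →L[ℂ] B := ⟨T, hcont⟩
    exact ⟨‖Tc‖, norm_nonneg _, fun a => Tc.le_opNorm a⟩
  -- the bilinear map φ(a,b) = T a * b + a * T b
  set φ : ↥A →ₗ[ℂ] ↥A →ₗ[ℂ] B := LinearMap.mk₂ ℂ (fun a b => T a * (b : B) + (a : B) * T b)
    (by intro a a' b; push_cast [map_add]; rw [add_mul, add_mul]; abel)
    (by intro c a b; push_cast [map_smul, smul_add]; simp only [smul_mul_assoc])
    (by intro a b b'; push_cast [map_add]; rw [mul_add, mul_add]; abel)
    (by intro a c b; push_cast [map_smul, smul_add]; rw [mul_smul_comm, mul_smul_comm])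
    with hφ
  have hφap : ∀ a b : ↥A, φ a b = T a * (b : B) + (a : B) * T b := fun a b => rfl
  have hcoe : ∀ a : ↥A, ‖(a : B)‖ = ‖a‖ := fun a => rfl
  -- basic norm bound for φ
  have hφb : ∀ a b : ↥A, ‖φ a b‖ ≤ 2 * C * ‖a‖ * ‖b‖ := by
    intro a b
    rw [hφap]
    calc ‖T a * (b:B) + (a:B) * T b‖ ≤ ‖T a * (b:B)‖ + ‖(a:B) * T b‖ := norm_add_le _ _
      _ ≤ ‖T a‖ * ‖(b:B)‖ + ‖(a:B)‖ * ‖T b‖ := by gcongr <;> exact norm_mul_le _ _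
      _ = ‖T a‖ * ‖b‖ + ‖a‖ * ‖T b‖ := by rw [hcoe, hcoe]
      _ ≤ (C * ‖a‖) * ‖b‖ + ‖a‖ * (C * ‖b‖) := by
          gcongr
          · exact hCb a
          · exact hCb b
      _ = 2 * C * ‖a‖ * ‖b‖ := by ring
  -- φ vanishes on zero products
  have hφz : ∀ a b : ↥A, a * b = 0 → φ a b = 0 := by
    intro a b hab
    rw [hφap]
    apply hT
    have : ((a * b : ↥A) : B) = 0 := by rw [hab]; rfl
    rwa [MulMemClass.coe_mul] at this
  -- Step 1 : φ (x * h) 1 = φ x h for selfadjoint h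
  have step1sa : ∀ (x h : ↥A), IsSelfAdjoint h → φ (x * h) 1 = φ x h := by
    intro x h hh
    set Φ₁ : ↥A →ₗ[ℂ] ↥A →ₗ[ℂ] B :=
      φ.comp (LinearMap.mulLeft ℂ x)
        - (LinearMap.llcomp ℂ ↥A ↥A B (φ x)).comp (LinearMap.mul ℂ ↥A) with hΦ₁
    have hΦ₁ap : ∀ a b : ↥A, Φ₁ a b = φ (x * a) b - φ x (a * b) := fun a b => rfl
    have key := keyLemma Φ₁ (4 * C * ‖x‖) (by positivity) ?_ ?_ h hh
    · rw [hΦ₁ap, hΦ₁ap, mul_one, one_mul, mul_one] at key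
      -- key : φ (x*h) 1 - φ x h = φ x h - φ x h
      rw [sub_self] at key
      exact sub_eq_zero.mp key
    · intro a b
      rw [hΦ₁ap]
      calc ‖φ (x * a) b - φ x (a * b)‖ ≤ ‖φ (x * a) b‖ + ‖φ x (a * b)‖ := norm_sub_le _ _
        _ ≤ 2 * C * ‖x * a‖ * ‖b‖ + 2 * C * ‖x‖ * ‖a * b‖ := by
            gcongr
            · exact hφb _ _
            · exact hφb _ _
        _ ≤ 2 * C * (‖x‖ * ‖a‖) * ‖b‖ + 2 * C * ‖x‖ * (‖a‖ * ‖b‖) := by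
            gcongr
            · exact norm_mul_le _ _
            · exact norm_mul_le _ _
        _ = 4 * C * ‖x‖ * ‖a‖ * ‖b‖ := by ring
    · intro a b hab
      rw [hΦ₁ap, hab, map_zero, sub_zero]
      apply hφz
      rw [mul_assoc, hab, mul_zero]
  -- Step 2 : φ 1 (h * y) = φ h y for selfadjoint h
  have step2sa : ∀ (y h : ↥A), IsSelfAdjoint h → φ 1 (h * y) = φ h y := by
    intro y h hh
    set Ψ : ↥A →ₗ[ℂ] ↥A →ₗ[ℂ] B :=
      φ.compl₂ (LinearMap.mulRight ℂ y)
        - (LinearMap.llcomp ℂ ↥A ↥A B (φ.flip y)).comp (LinearMap.mul ℂ ↥A) with hΨ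
    have hΨap : ∀ a b : ↥A, Ψ a b = φ a (b * y) - φ (a * b) y := fun a b => rfl
    have key := keyLemma Ψ (4 * C * ‖y‖) (by positivity) ?_ ?_ h hh
    · rw [hΨap, hΨap, one_mul, one_mul, mul_one] at key
      -- key : φ h (1 * y)... check shapes
      rw [sub_self] at key
      exact sub_eq_zero.mp key.symm
    · intro a b
      rw [hΨap]
      calc ‖φ a (b * y) - φ (a * b) y‖ ≤ ‖φ a (b * y)‖ + ‖φ (a * b) y‖ := norm_sub_le _ _
        _ ≤ 2 * C * ‖a‖ * ‖b * y‖ + 2 * C * ‖a * b‖ * ‖y‖ := by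
            gcongr
            · exact hφb _ _
            · exact hφb _ _
        _ ≤ 2 * C * ‖a‖ * (‖b‖ * ‖y‖) + 2 * C * (‖a‖ * ‖b‖) * ‖y‖ := by
            gcongr
            · exact norm_mul_le _ _
            · exact norm_mul_le _ _
        _ = 4 * C * ‖y‖ * ‖a‖ * ‖b‖ := by ring
    · intro a b hab
      rw [hΨap, hab, map_zero, LinearMap.zero_apply, sub_zero]
      apply hφz
      rw [← mul_assoc, hab, zero_mul]
  -- selfadjoint decomposition
  have decomp : ∀ y : ↥A, ∃ h₁ h₂ : ↥A, IsSelfAdjoint h₁ ∧ IsSelfAdjoint h₂ ∧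
      y = h₁ + Complex.I • h₂ := by
    intro y
    refine ⟨(2:ℂ)⁻¹ • (y + star y), (2*Complex.I)⁻¹ • (y - star y), ?_, ?_, ?_⟩
    · rw [IsSelfAdjoint, star_smul, star_add, star_star]
      have : star ((2:ℂ)⁻¹) = (2:ℂ)⁻¹ := by
        rw [Complex.star_def, map_inv₀, Complex.conj_ofNat]
      rw [this, add_comm]
    · rw [IsSelfAdjoint, star_smul, star_sub, star_star]
      have h1 : star ((2*Complex.I)⁻¹) = -(2*Complex.I)⁻¹ := by
        rw [Complex.star_def, map_inv₀, map_mul, Complex.conj_I, Complex.conj_ofNat]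
        rw [mul_neg, inv_neg]
      rw [h1, neg_smul, ← smul_neg, neg_sub]
    · have hsc : Complex.I * (2*Complex.I)⁻¹ = (2:ℂ)⁻¹ := by
        field_simp
      rw [smul_smul, hsc, ← smul_add]
      have : y + star y + (y - star y) = (2:ℂ) • y := by
        rw [two_smul]
        abel
      rw [this, smul_smul]
      norm_num
  -- Step 1 for all x y
  have step1 : ∀ x y : ↥A, φ (x * y) 1 = φ x y := by
    intro x y
    obtain ⟨h₁, h₂, hs₁, hs₂, hy⟩ := decomp y
    rw [hy, mul_add, mul_smul_comm]
    rw [map_add, LinearMap.add_apply, map_smul, LinearMap.smul_apply]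
    rw [step1sa x h₁ hs₁, step1sa x h₂ hs₂]
    rw [map_add, map_smul]
  -- Step 2 for all x y
  have step2 : ∀ x y : ↥A, φ 1 (x * y) = φ x y := by
    intro x y
    obtain ⟨h₁, h₂, hs₁, hs₂, hx⟩ := decomp x
    rw [hx, add_mul, smul_mul_assoc]
    rw [map_add, map_smul]
    rw [step2sa y h₁ hs₁, step2sa y h₂ hs₂]
    rw [map_add, LinearMap.add_apply, map_smul, LinearMap.smul_apply]
  -- T 1 commutes with everything in A
  have commT1 : ∀ z : ↥A, (z : B) * T 1 = T 1 * (z : B) := by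
    intro z
    have e1 := step1 1 z
    have e2 := step2 1 z
    rw [one_mul] at e1 e2
    rw [← e2] at e1
    -- e1 : φ z 1 = φ 1 z
    rw [hφap, hφap] at e1
    simp only [OneMemClass.coe_one, mul_one, one_mul] at e1
    -- e1 : T z + ↑z * T 1 = T 1 * ↑z + T z
    have := e1
    calc (z:B) * T 1 = (T z + (z:B) * T 1) - T z := by abel
      _ = (T 1 * (z:B) + T z) - T z := by rw [this]
      _ = T 1 * (z:B) := by abel
  -- conclusion
  intro x y
  have e1 := step1 x y
  rw [hφap, hφap] at e1
  simp only [OneMemClass.coe_one, mul_one] at e1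
  -- e1 : T (x*y) + ↑(x*y) * T 1 = T x * ↑y + ↑x * T y
  have e3 : (x:B) * T 1 * (y:B) = ((x * y : ↥A) : B) * T 1 := by
    rw [MulMemClass.coe_mul, mul_assoc, ← commT1 y, ← mul_assoc]
  rw [e3]
  rw [← e1]
  abel
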